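/- For all reals α ≥ 1 and c > 1, if γ is a real number with 1 < γ < 1 + (c−1)/α and D(1/α ‖ (γ−1)/(c−1)) = ln(c)/α, then γ < brute(α) = 1 + exp(−α·H(1/α)). -/

import Mathlib

/-- Kullback–Leibler divergence `D(a‖b) = a·ln(a/b) + (1−a)·ln((1−a)/(1−b))`.
(The convention `0·ln 0 = 0` holds automatically since `Real.log 0 = 0`.) -/
noncomputable def klDiv (a b : ℝ) : ℝ :=
  a * Real.log (a / b) + (1 - a) * Real.log ((1 - a) / (1 - b))

/-- Entropy function `H(p) = −p·ln p − (1−p)·ln(1−p)` (with `0·ln 0 = 0`). -/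
noncomputable def entropy (p : ℝ) : ℝ :=
  -p * Real.log p - (1 - p) * Real.log (1 - p)

/-- `brute(α) = 1 + exp(−α·H(1/α))`. -/
noncomputable def brute (α : ℝ) : ℝ := 1 + Real.exp (-α * entropy (1 / α))

open Real Set

lemma core (β : ℝ) (hβ : 0 < β) (v : ℝ) (hv1 : 1 < v) (hv2 : v < (β+1)/β) :
    (1/(β+1)) * (β/(β+1)) ^ β * v * (v ^ β - 1) < v - 1 := by
  have hβ1 : (0:ℝ) < β + 1 := by linarith
  have hvmax : (0:ℝ) < (β+1)/β := by positivity
  set s := v - 1 with hs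
  have hs0 : 0 < s := by simp [hs]; linarith
  have hsβ : β * s < 1 := by
    have h := (lt_div_iff₀ hβ).mp hv2
    simp only [hs]; nlinarith
  have hconv := convexOn_rpow (le_add_of_nonneg_left hβ.le : 1 ≤ β + 1)
  have hsec := hconv.2 (mem_Ici.mpr zero_le_one) (mem_Ici.mpr hvmax.le)
      (by linarith : (0:ℝ) ≤ 1 - β*s) (by positivity : (0:ℝ) ≤ β*s) (by ring)
  simp only [smul_eq_mul, Real.one_rpow] at hsec
  have hcomb : (1 - β*s) * 1 + β*s * ((β+1)/β) = v := by
    field_simp; ring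
  rw [hcomb] at hsec
  set V := ((β+1)/β) ^ (β+1) with hV
  have hV0 : 0 < V := rpow_pos_of_pos hvmax _
  have key : v ^ (β+1) - v < β * s * V := by
    have : v ^ (β+1) ≤ (1 - β*s) * 1 + β*s * V := hsec
    nlinarith
  have hA : (1/(β+1)) * (β/(β+1)) ^ β = 1 / (β * V) := by
    have h1 : ((β+1)/β) ^ (β+1) = ((β+1)/β) ^ β * ((β+1)/β) := by
      rw [Real.rpow_add hvmax, Real.rpow_one]
    have h2 : (β/(β+1)) ^ β * ((β+1)/β) ^ β = 1 := by
      rw [← Real.mul_rpow (by positivity) hvmax.le]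
      rw [div_mul_div_comm]
      rw [mul_comm β (β+1)]
      rw [div_self (by positivity)]
      exact Real.one_rpow β
    have h3 : (0:ℝ) < ((β+1)/β) ^ β := rpow_pos_of_pos hvmax _
    rw [hV, h1]
    field_simp
    nlinarith [h2]
  rw [hA]
  have hv0 : 0 < v := by linarith
  have hpow : v * (v ^ β - 1) = v ^ (β+1) - v := by
    have : v ^ (β+1) = v ^ β * v := by
      rw [Real.rpow_add hv0, Real.rpow_one]
    rw [this]; ring
  rw [mul_assoc, hpow, div_mul_eq_mul_div, one_mul, div_lt_iff₀ (by positivity)]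
  calc v ^ (β+1) - v < β * s * V := key
    _ = (v - 1) * (β * V) := by rw [hs]; ring

/-- For all reals `α ≥ 1` and `c > 1`, if `γ` satisfies `1 < γ < 1 + (c−1)/α` and
`D(1/α ‖ (γ−1)/(c−1)) = ln(c)/α`, then `γ < brute(α) = 1 + exp(−α·H(1/α))`. -/
theorem stmt7 (α c γ : ℝ) (hα : 1 ≤ α) (hc : 1 < c)
    (h1 : 1 < γ) (h2 : γ < 1 + (c - 1) / α)
    (h3 : klDiv (1 / α) ((γ - 1) / (c - 1)) = Real.log c / α) :
    γ < brute α := by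
  have hα0 : (0:ℝ) < α := by linarith
  have hc1 : (0:ℝ) < c - 1 := by linarith
  have hc0 : (0:ℝ) < c := by linarith
  set p := 1/α with hp
  have hp0 : 0 < p := by positivity
  set x := (γ-1)/(c-1) with hx
  have hx0 : 0 < x := by apply div_pos <;> linarith
  have hxp : x < p := by
    rw [hx, hp, div_lt_div_iff₀ hc1 hα0]
    nlinarith [(lt_div_iff₀ hα0).mp (by linarith : γ - 1 < (c-1)/α)]
  have hγx : γ - 1 = x * (c - 1) := by
    rw [hx]; field_simp
  rcases eq_or_lt_of_le hα with heq | hαgt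
  · -- α = 1
    have hα1 : α = 1 := heq.symm
    subst hα1
    have hpe : p = 1 := by rw [hp]; norm_num
    rw [klDiv, hpe] at h3
    simp only [sub_self, zero_mul, add_zero, one_mul, one_div] at h3
    -- h3 : log (1/x) = log c  (after simp, log x⁻¹ = log c / 1)
    have hxc : x = 1/c := by
      have h4 : Real.log x⁻¹ = Real.log c := by
        simpa using h3
      have := congrArg Real.exp h4
      rw [Real.exp_log (by positivity), Real.exp_log hc0] at this
      rw [← this]; simp
    have hbr : brute 1 = 2 := by
      simp [brute, entropy]; norm_num
    rw [hbr]
    have : γ - 1 = (c-1)/c := by rw [hγx, hxc]; ring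
    nlinarith [(div_lt_one hc0).mpr (by linarith : c - 1 < c)]
  · -- α > 1
    have hβ : 0 < α - 1 := by linarith
    have hp1 : p < 1 := by rw [hp, div_lt_one hα0]; linarith
    set u := 1 - x with hu
    have hu0 : 0 < u := by simp only [hu]; linarith
    have hu1 : u < 1 := by simp only [hu]; linarith
    have hup : 1 - p < u := by simp only [hu]; linarith
    have hαp : α * p = 1 := by rw [hp]; field_simp
    rw [klDiv, ← hu] at h3
    have h6 : Real.log (p/x) + (α-1) * Real.log ((1-p)/u) = Real.log c := by
      have hthis : α * (p * Real.log (p/x) + (1 - p) * Real.log ((1-p)/u))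
          = Real.log c := by
        rw [h3]; field_simp
      linear_combination hthis - (Real.log (p/x) - Real.log ((1-p)/u)) * hαp
    have hcval : c = (p/x) * ((1-p)/u) ^ (α-1) := by
      have : c = Real.exp (Real.log (p/x) + (α-1) * Real.log ((1-p)/u)) := by
        rw [h6, Real.exp_log hc0]
      rw [this, Real.exp_add, Real.exp_log (by positivity),
        Real.rpow_def_of_pos (by apply div_pos <;> linarith)]
      ring_nf
    -- brute value
    have hbr : Real.exp (-α * entropy p) = p * (1-p) ^ (α-1) := by
      have h8 : -α * entropy p = Real.log p + (α-1) * Real.log (1-p) := by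
        rw [entropy]
        linear_combination (Real.log p - Real.log (1-p)) * hαp
      rw [h8, Real.exp_add, Real.exp_log hp0,
        Real.rpow_def_of_pos (by linarith : (0:ℝ) < 1 - p)]
      ring_nf
    have hbrute : brute α = 1 + p * (1-p) ^ (α-1) := by
      rw [brute, ← hp, hbr]
    rw [hbrute]
    -- main inequality via core
    set v := 1/u with hv
    have hv1 : 1 < v := by rw [hv]; rw [lt_div_iff₀ hu0]; linarith
    have hv2 : v < ((α-1)+1)/(α-1) := by
      rw [hv, div_lt_div_iff₀ hu0 hβ]
      have : 1 - p = (α-1)/α := by rw [hp]; field_simp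
      nlinarith [hup, this]
    have hcore := core (α-1) hβ v hv1 hv2
    have hpc : 1/((α-1)+1) = p := by rw [hp]; norm_num
    have hqc : (α-1)/((α-1)+1) = 1 - p := by rw [hp]; field_simp; ring
    rw [hpc, hqc] at hcore
    -- hcore : p * (1-p)^(α-1) * v * (v^(α-1) - 1) < v - 1
    have hdiv : p * (1-p) ^ (α-1) * (v ^ (α-1) - 1) < x := by
      have hv0 : 0 < v := by linarith
      have h9 : (v - 1)/v = x := by
        rw [hv]; field_simp [hu]; linarith
      calc p * (1-p) ^ (α-1) * (v ^ (α-1) - 1)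
          = p * (1-p) ^ (α-1) * v * (v ^ (α-1) - 1) * v⁻¹ := by
            field_simp
        _ < (v - 1) * v⁻¹ :=
            mul_lt_mul_of_pos_right hcore (by positivity)
        _ = x := by rw [← h9, div_eq_mul_inv]
    -- put it together
    have hvβ : v ^ (α-1) = 1 / u ^ (α-1) := by
      rw [hv, Real.div_rpow zero_le_one hu0.le, Real.one_rpow]
    have hR : ((1-p)/u) ^ (α-1) = (1-p) ^ (α-1) / u ^ (α-1) :=
      Real.div_rpow (by linarith) hu0.le _
    have hxc2 : x * c = p * ((1-p)/u) ^ (α-1) := by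
      rw [hcval]; field_simp
    have hγ2 : γ - 1 = p * ((1-p) ^ (α-1) / u ^ (α-1)) - x := by
      rw [hγx]
      linear_combination hxc2 + p * hR
    have huβ : 0 < u ^ (α-1) := rpow_pos_of_pos hu0 _
    have hfin : p * ((1-p) ^ (α-1) / u ^ (α-1)) - p * (1-p)^(α-1)
        = p * (1-p) ^ (α-1) * (v ^ (α-1) - 1) := by
      rw [hvβ]; ring
    linarith [hdiv, hfin, hγ2]
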